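/- Let P₁, P₂ and Q be finite posets and K a field. If J_{P₁,Q} is generated by squarefree binomials and J_{P₂,Q} is generated by squarefree binomials, then J_{P₁+P₂,Q} is generated by squarefree binomials, where P₁ + P₂ is the disjoint sum of P₁ and P₂. -/

import Mathlib

open MvPolynomial

/-- The `K`-algebra map sending the variable `t_φ` (indexed by an isotone map
`φ : P →o Q`) to the monomial `∏_{p ∈ P} x_{p, φ(p)}`. -/
noncomputable def isotonianMap (K P Q : Type) [Field K] [PartialOrder P] [Fintype P]
    [PartialOrder Q] [Fintype Q] :
    MvPolynomial (P →o Q) K →ₐ[K] MvPolynomial (P × Q) K :=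
  aeval fun φ : P →o Q => ∏ p : P, X (p, φ p)

/-- The defining ideal `J_{P,Q}` of the isotonian algebra `K[P,Q]`. -/
noncomputable def isotonianIdeal (K P Q : Type) [Field K] [PartialOrder P] [Fintype P]
    [PartialOrder Q] [Fintype Q] :
    Ideal (MvPolynomial (P →o Q) K) :=
  RingHom.ker (isotonianMap K P Q)

/-- A binomial `monomial u 1 - monomial v 1` which is squarefree: all exponents are at most 1. -/
def IsSquarefreeBinomial {σ K : Type} [Field K] (f : MvPolynomial σ K) : Prop :=
  ∃ u v : σ →₀ ℕ, (∀ i, u i ≤ 1) ∧ (∀ i, v i ≤ 1) ∧ f = monomial u 1 - monomial v 1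

set_option linter.unusedSectionVars false
set_option linter.unusedVariables false

namespace Statement9
open MvPolynomial
noncomputable section
open scoped Classical

variable {σ τ K : Type} [Field K]

noncomputable def Dmap (E : σ → (τ →₀ ℕ)) : (σ →₀ ℕ) →ₗ[ℕ] (τ →₀ ℕ) :=
  Finsupp.linearCombination ℕ E

lemma Dmap_single (E : σ → (τ →₀ ℕ)) (χ : σ) (n : ℕ) :
    Dmap E (Finsupp.single χ n) = n • E χ := by
  simp [Dmap]

lemma prod_monomial (s : Finset σ) (g : σ → (τ →₀ ℕ)) :
    (∏ i ∈ s, (monomial (g i) (1:K))) = monomial (∑ i ∈ s, g i) 1 := by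
  induction s using Finset.induction with
  | empty => simp
  | insert a s h ih => simp [Finset.prod_insert h, Finset.sum_insert h, ih, monomial_mul]

/-- weight = sum of values -/
def wt {α : Type} : (α →₀ ℕ) →+ ℕ :=
  Finsupp.liftAddHom (fun _ => AddMonoidHom.id ℕ)

lemma wt_apply {α : Type} (x : α →₀ ℕ) : wt x = x.sum fun _ n => n := rfl

lemma wt_single {α : Type} (a : α) (n : ℕ) : wt (Finsupp.single a n) = n := by
  simp [wt]

lemma wt_eq_zero {α : Type} {x : α →₀ ℕ} (h : wt x = 0) : x = 0 := by
  rw [wt_apply, Finsupp.sum] at h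
  ext a
  by_cases ha : a ∈ x.support
  · exact Finset.sum_eq_zero_iff.mp h a ha
  · simpa using Finsupp.notMem_support_iff.mp ha

section Evec
variable {P Q : Type} [PartialOrder P] [PartialOrder Q] [Fintype P] [Fintype Q]

def Evec (φ : P →o Q) : P × Q →₀ ℕ := ∑ p : P, Finsupp.single (p, φ p) 1

lemma prod_X_eq (φ : P →o Q) : (∏ p : P, (X (p, φ p) : MvPolynomial (P × Q) K))
    = monomial (Evec φ) 1 := by
  rw [Evec, ← prod_monomial]
  refine Finset.prod_congr rfl fun p _ => ?_
  rw [← X_pow_eq_monomial, pow_one]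

lemma Evec_apply (φ : P →o Q) (p : P) (q : Q) :
    Evec φ (p, q) = if φ p = q then 1 else 0 := by
  rw [Evec, Finsupp.finset_sum_apply, Finset.sum_eq_single p]
  · rw [Finsupp.single_apply]
    simp [Prod.ext_iff]
  · intro p' _ hp'
    rw [Finsupp.single_apply]
    simp only [Prod.ext_iff, if_neg]
    rw [if_neg]
    rintro ⟨h, -⟩
    exact hp' h
  · simp

lemma wt_Evec (φ : P →o Q) : wt (Evec φ) = Fintype.card P := by
  rw [Evec, map_sum]
  simp only [wt_single]
  rw [Finset.sum_const, smul_eq_mul, mul_one, Fintype.card]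

lemma isotonianMap_eq :
    isotonianMap K P Q = aeval (fun φ : P →o Q => monomial (Evec φ) (1:K)) := by
  unfold isotonianMap
  congr 1
  funext φ
  exact prod_X_eq φ

lemma wt_Dmap_Evec (x : (P →o Q) →₀ ℕ) :
    wt (Dmap Evec x) = Fintype.card P * wt x := by
  induction x using Finsupp.induction with
  | zero => simp
  | single_add χ n f hf hn ih =>
    rw [map_add, map_add, map_add, mul_add, ih]
    congr 1
    rw [wt_single]
    show wt ((Dmap Evec) (Finsupp.single χ n)) = _
    rw [Dmap, Finsupp.linearCombination_single, map_nsmul, wt_Evec, smul_eq_mul, mul_comm]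

lemma aevalE_monomial (E : σ → (τ →₀ ℕ)) (b : σ →₀ ℕ) (c : K) :
    aeval (fun χ => monomial (E χ) (1:K)) (monomial b c) = monomial (Dmap E b) c := by
  classical
  rw [aeval_monomial]
  have h1 : (b.prod fun n e => (monomial (E n) (1:K)) ^ e)
      = monomial (b.sum fun n e => e • E n) 1 := by
    rw [Finsupp.prod]
    have : ∀ χ ∈ b.support, (monomial (E χ) (1:K)) ^ b χ = monomial ((b χ) • E χ) (1:K) := by
      intro χ _; rw [monomial_pow, one_pow]
    rw [Finset.prod_congr rfl this, prod_monomial, Finsupp.sum]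
  rw [h1]
  have h2 : Dmap E b = b.sum fun n e => e • E n := by
    simp [Dmap, Finsupp.linearCombination_apply]
  rw [h2, algebraMap_eq, C_mul_monomial, mul_one]


--KER
lemma ker_mem_span_binomials (E : σ → (τ →₀ ℕ)) (f : MvPolynomial σ K)
    (hf : aeval (fun χ => monomial (E χ) (1:K)) f = 0) :
    f ∈ Ideal.span {g : MvPolynomial σ K |
      ∃ u v, Dmap E u = Dmap E v ∧ g = monomial u 1 - monomial v 1} := by
  classical
  set Φ := aeval (R := K) (fun χ => monomial (E χ) (1:K)) with hΦ
  set S := {g : MvPolynomial σ K |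
      ∃ u v, Dmap E u = Dmap E v ∧ g = monomial u 1 - monomial v 1} with hS
  generalize hn : f.support.card = n at *
  induction n using Nat.strong_induction_on generalizing f with
  | _ n IH =>
  by_cases hf0 : f = 0
  · simp [hf0, Ideal.zero_mem]
  obtain ⟨a, ha⟩ := (support_nonempty.mpr hf0)
  set F := f.support.filter (fun b => Dmap E b = Dmap E a) with hF
  have haF : a ∈ F := by simp [hF, ha]
  -- the image of f, coefficient at Dmap E a
  have himg : Φ f = ∑ b ∈ f.support, monomial (Dmap E b) (coeff b f) := by
    conv_lhs => rw [f.as_sum]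
    rw [map_sum]
    exact Finset.sum_congr rfl fun b _ => aevalE_monomial E b _
  have hsum : ∑ b ∈ F, coeff b f = 0 := by
    have := congrArg (coeff (Dmap E a)) hf
    rw [himg] at this
    simp only [coeff_sum, coeff_monomial, coeff_zero] at this
    rw [hF, Finset.sum_filter]
    simpa using this
  set h := ∑ b ∈ F, (coeff b f) • (monomial b (1:K) - monomial a 1) with hh
  have hmem : h ∈ Ideal.span S := by
    refine Ideal.sum_mem _ fun b hb => ?_
    rw [smul_eq_C_mul]
    exact Ideal.mul_mem_left _ _ (Ideal.subset_span ⟨b, a, (Finset.mem_filter.mp hb).2, rfl⟩)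
  have hh2 : h = ∑ b ∈ F, monomial b (coeff b f) := by
    rw [hh]
    rw [Finset.sum_congr rfl (fun b _ => smul_sub (coeff b f) _ _), Finset.sum_sub_distrib]
    have h1 : ∀ b ∈ F, (coeff b f) • (monomial b (1:K)) = monomial b (coeff b f) := by
      intro b _; rw [smul_monomial, smul_eq_mul, mul_one]
    have h2 : (∑ b ∈ F, (coeff b f) • (monomial a (1:K))) = monomial a (∑ b ∈ F, coeff b f) := by
      rw [← Finset.sum_smul, hsum]; simp
    rw [Finset.sum_congr rfl h1, h2, hsum]
    simp
  set f' := f - h with hf'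
  have hf'eq : f' = ∑ b ∈ f.support \ F, monomial b (coeff b f) := by
    rw [hf', hh2, Finset.sum_sdiff_eq_sub (Finset.filter_subset _ _), ← f.as_sum]
  have hsupp : f'.support ⊆ f.support \ F := by
    rw [hf'eq]
    refine Finset.Subset.trans support_sum ?_
    intro b hb
    rw [Finset.mem_biUnion] at hb
    obtain ⟨c, hc, hbc⟩ := hb
    have := support_monomial_subset hbc
    rw [Finset.mem_singleton] at this
    exact this ▸ hc
  have hcard : f'.support.card < n := by
    refine lt_of_le_of_lt (Finset.card_le_card hsupp) ?_
    rw [← hn]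
    exact Finset.card_lt_card (Finset.ssubset_iff_of_subset (Finset.sdiff_subset) |>.mpr
      ⟨a, ha, by simp [haF]⟩)
  have hΦf' : Φ f' = 0 := by
    have hΦh : Φ h = 0 := by
      rw [hh, map_sum]
      refine Finset.sum_eq_zero fun b hb => ?_
      rw [map_smul, map_sub, aevalE_monomial, aevalE_monomial, (Finset.mem_filter.mp hb).2]
      simp
    rw [hf', map_sub, hf, hΦh, sub_zero]
  have := IH _ hcard f' hΦf' rfl
  have : f' + h ∈ Ideal.span S := Ideal.add_mem _ this hmem
  simpa [hf'] using this


--CHAIN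
/-- one binomial move -/
def StepR (G : (σ →₀ ℕ) → (σ →₀ ℕ) → Prop) (x y : σ →₀ ℕ) : Prop :=
  ∃ u v w, G u v ∧ x = u + w ∧ y = v + w

/-- chains of binomial moves -/
def SRel (G : (σ →₀ ℕ) → (σ →₀ ℕ) → Prop) : (σ →₀ ℕ) → (σ →₀ ℕ) → Prop :=
  Relation.ReflTransGen (StepR G)

variable {G : (σ →₀ ℕ) → (σ →₀ ℕ) → Prop}

lemma SRel.rfl {x : σ →₀ ℕ} : SRel G x x := Relation.ReflTransGen.refl

lemma SRel.trans {x y z : σ →₀ ℕ} (h : SRel G x y) (h' : SRel G y z) : SRel G x z :=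
  Relation.ReflTransGen.trans h h'

lemma SRel.single {x y : σ →₀ ℕ} (h : StepR G x y) : SRel G x y :=
  Relation.ReflTransGen.single h

lemma SRel.ofG (h : ∀ u v, G u v → G v u) {u v : σ →₀ ℕ} (huv : G u v) : SRel G u v :=
  SRel.single ⟨u, v, 0, huv, (add_zero u).symm, (add_zero v).symm⟩

lemma SRel.symm (h : ∀ u v, G u v → G v u) {x y : σ →₀ ℕ} (hxy : SRel G x y) : SRel G y x := by
  have hs : Symmetric (StepR G) := by
    rintro a b ⟨u, v, w, hg, ha, hb⟩
    exact ⟨v, u, w, h _ _ hg, hb, ha⟩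
  haveI : Std.Symm (StepR G) := ⟨fun a b h => hs h⟩
  exact (Relation.ReflTransGen.symmetric (r := StepR G)).symm _ _ hxy

lemma SRel.add_right {x y : σ →₀ ℕ} (z : σ →₀ ℕ) (h : SRel G x y) : SRel G (x + z) (y + z) := by
  induction h with
  | refl => exact SRel.rfl
  | tail _ hstep ih =>
    obtain ⟨u, v, w, hg, hb, hc⟩ := hstep
    exact ih.trans (SRel.single ⟨u, v, w + z, hg, by rw [hb, add_assoc], by rw [hc, add_assoc]⟩)

lemma SRel.add_left {x y : σ →₀ ℕ} (z : σ →₀ ℕ) (h : SRel G x y) : SRel G (z + x) (z + y) := by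
  rw [add_comm z x, add_comm z y]; exact h.add_right z

lemma SRel.add {x y x' y' : σ →₀ ℕ} (h : SRel G x y) (h' : SRel G x' y') :
    SRel G (x + x') (y + y') :=
  (h.add_right x').trans (h'.add_left y)

/-- easy direction: a chain gives ideal membership -/
lemma SRel.mem_span {a b : σ →₀ ℕ} (h : SRel G a b) :
    monomial a (1:K) - monomial b 1 ∈
      Ideal.span {g : MvPolynomial σ K | ∃ u v, G u v ∧ g = monomial u 1 - monomial v 1} := by
  induction h with
  | refl => simp
  | @tail y z _ hstep ih =>
    obtain ⟨u, v, w, hg, hb, hc⟩ := hstep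
    have h2 : monomial y (1:K) - monomial z 1 ∈
        Ideal.span {g : MvPolynomial σ K | ∃ u v, G u v ∧ g = monomial u 1 - monomial v 1} := by
      have : monomial y (1:K) - monomial z 1
          = monomial w 1 * (monomial u 1 - monomial v 1) := by
        rw [mul_sub, monomial_mul, monomial_mul, one_mul, hb, hc, add_comm w u, add_comm w v]
      rw [this]
      exact Ideal.mul_mem_left _ _ (Ideal.subset_span ⟨u, v, hg, Eq.refl _⟩)
    have := Ideal.add_mem _ ih h2
    simpa using this

/-- the chain relation as an additive congruence -/
def chainCon (G : (σ →₀ ℕ) → (σ →₀ ℕ) → Prop) (h : ∀ u v, G u v → G v u) : AddCon (σ →₀ ℕ) where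
  r := SRel G
  iseqv := ⟨fun _ => SRel.rfl, SRel.symm h, SRel.trans⟩
  add' := fun h1 h2 => h1.add h2

/-- hard direction: ideal membership gives a chain -/
lemma srel_of_mem_span (hsymm : ∀ u v, G u v → G v u) {a b : σ →₀ ℕ}
    (h : monomial a (1:K) - monomial b 1 ∈
      Ideal.span {g : MvPolynomial σ K | ∃ u v, G u v ∧ g = monomial u 1 - monomial v 1}) :
    SRel G a b := by
  classical
  set c : AddCon (σ →₀ ℕ) := chainCon G hsymm with hc
  let q : MvPolynomial σ K →+* AddMonoidAlgebra K c.Quotient :=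
    AddMonoidAlgebra.mapDomainRingHom K c.mk'
  have hq : ∀ (u : σ →₀ ℕ), q (monomial u 1) = AddMonoidAlgebra.single ((u : σ →₀ ℕ) : c.Quotient) (1:K) := by
    intro u
    show AddMonoidAlgebra.mapDomain c.mk' (monomial u (1:K)) = _
    rw [← single_eq_monomial, AddMonoidAlgebra.mapDomain_single]
    rfl
  have hker : Ideal.span {g : MvPolynomial σ K | ∃ u v, G u v ∧ g = monomial u 1 - monomial v 1}
      ≤ RingHom.ker q := by
    rw [Ideal.span_le]
    rintro g ⟨u, v, hg, rfl⟩
    rw [SetLike.mem_coe, RingHom.mem_ker, map_sub, hq, hq]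
    have : ((u : σ →₀ ℕ) : c.Quotient) = ((v : σ →₀ ℕ) : c.Quotient) :=
      c.eq.mpr (SRel.ofG hsymm hg)
    rw [this, sub_self]
  have h0 : q (monomial a 1 - monomial b 1) = 0 := hker h
  rw [map_sub, hq, hq, sub_eq_zero] at h0
  have := AddMonoidAlgebra.single_inj.mp h0
  rcases this with ⟨heq, -⟩ | ⟨h1, -⟩
  · exact c.eq.mp heq
  · exact absurd h1 one_ne_zero


end Evec

section SumPart
variable {P₁ P₂ Q : Type} [PartialOrder P₁] [Fintype P₁] [PartialOrder P₂] [Fintype P₂]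
  [PartialOrder Q] [Fintype Q]

/-- restriction of an isotone map on the disjoint sum to the first summand -/
def r1 (χ : (P₁ ⊕ P₂) →o Q) : P₁ →o Q :=
  ⟨fun p => χ (Sum.inl p), fun _ _ h => χ.monotone (Sum.inl_le_inl_iff.mpr h)⟩

/-- restriction of an isotone map on the disjoint sum to the second summand -/
def r2 (χ : (P₁ ⊕ P₂) →o Q) : P₂ →o Q :=
  ⟨fun p => χ (Sum.inr p), fun _ _ h => χ.monotone (Sum.inr_le_inr_iff.mpr h)⟩

/-- pairing of two isotone maps into one on the disjoint sum -/
def pairHom (φ : P₁ →o Q) (ψ : P₂ →o Q) : (P₁ ⊕ P₂) →o Q :=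
  ⟨Sum.elim φ ψ, by
    intro x y h
    rw [Sum.le_def] at h
    cases h with
    | inl h => exact φ.monotone h
    | inr h => exact ψ.monotone h⟩

@[simp] lemma r1_pairHom (φ : P₁ →o Q) (ψ : P₂ →o Q) : r1 (pairHom φ ψ) = φ := rfl
@[simp] lemma r2_pairHom (φ : P₁ →o Q) (ψ : P₂ →o Q) : r2 (pairHom φ ψ) = ψ := rfl
@[simp] lemma pairHom_r (χ : (P₁ ⊕ P₂) →o Q) : pairHom (r1 χ) (r2 χ) = χ := by
  apply OrderHom.ext
  funext p
  cases p <;> rfl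

lemma pairHom_inj {φ φ' : P₁ →o Q} {ψ ψ' : P₂ →o Q} (h : pairHom φ ψ = pairHom φ' ψ') :
    φ = φ' ∧ ψ = ψ' := by
  constructor
  · rw [← r1_pairHom φ ψ, h, r1_pairHom]
  · rw [← r2_pairHom φ ψ, h, r2_pairHom]

end SumPart

section FinsuppHelpers
variable {ι α β : Type}

lemma apply_le_mapDomain (f : α → β) (x : α →₀ ℕ) (χ : α) :
    x χ ≤ Finsupp.mapDomain f x (f χ) := by
  classical
  rw [Finsupp.mapDomain, Finsupp.sum_apply]
  by_cases hχ : χ ∈ x.support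
  · rw [Finsupp.sum]
    have h1 : ∀ i ∈ x.support, (0:ℕ) ≤ Finsupp.single (f i) (x i) (f χ) := fun _ _ => Nat.zero_le _
    have := Finset.single_le_sum h1 hχ
    simpa [Finsupp.single_apply] using this
  · simp [Finsupp.notMem_support_iff.mp hχ]

lemma exists_preim_of_pos (f : α → β) (x : α →₀ ℕ) (s : β)
    (h : 0 < Finsupp.mapDomain f x s) : ∃ χ ∈ x.support, f χ = s := by
  classical
  have hs : s ∈ (Finsupp.mapDomain f x).support := Finsupp.mem_support_iff.mpr (Nat.pos_iff_ne_zero.mp h)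
  have := Finsupp.mapDomain_support hs
  obtain ⟨χ, hχ, rfl⟩ := Finset.mem_image.mp this
  exact ⟨χ, hχ, rfl⟩

lemma wt_mapDomain (f : α → β) (x : α →₀ ℕ) : wt (Finsupp.mapDomain f x) = wt x := by
  rw [wt_apply, wt_apply, Finsupp.sum_mapDomain_index] <;> simp

lemma sq_eq_sum_single (u : α →₀ ℕ) (hu : ∀ i, u i ≤ 1) :
    u = ∑ i ∈ u.support, Finsupp.single i 1 := by
  classical
  ext a
  rw [Finsupp.finset_sum_apply]
  by_cases ha : a ∈ u.support
  · rw [Finset.sum_eq_single a]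
    · have h1 : 1 ≤ u a := Nat.one_le_iff_ne_zero.mpr (Finsupp.mem_support_iff.mp ha)
      simp [le_antisymm (hu a) h1]
    · intro b _ hb; simp [Finsupp.single_apply, hb]
    · simp [ha]
  · rw [Finsupp.notMem_support_iff.mp ha, eq_comm]
    refine Finset.sum_eq_zero fun b hb => ?_
    have : b ≠ a := fun h => ha (h ▸ hb)
    simp [Finsupp.single_apply, this]

lemma wt_sq (u : α →₀ ℕ) (hu : ∀ i, u i ≤ 1) : wt u = u.support.card := by
  classical
  conv_lhs => rw [sq_eq_sum_single u hu]
  rw [map_sum]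
  simp [wt_single]

lemma sum_single_apply (s : Finset ι) (f : ι → α) (a : α) :
    (∑ i ∈ s, Finsupp.single (f i) (1:ℕ)) a = (s.filter (fun i => f i = a)).card := by
  classical
  rw [Finsupp.finset_sum_apply, Finset.card_filter, Finset.sum_congr rfl]
  intro i _
  rw [Finsupp.single_apply]

lemma sum_single_sf (s : Finset ι) (f : ι → α) (hinj : Set.InjOn f s) (a : α) :
    (∑ i ∈ s, Finsupp.single (f i) (1:ℕ)) a ≤ 1 := by
  classical
  rw [sum_single_apply]
  rw [Finset.card_le_one]
  intro i hi j hj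
  rw [Finset.mem_filter] at hi hj
  exact hinj hi.1 hj.1 (hi.2.trans hj.2.symm)

lemma sum_single_le (s : Finset ι) (f : ι → α) (c : α →₀ ℕ) (hinj : Set.InjOn f s)
    (hmem : ∀ i ∈ s, f i ∈ c.support) :
    (∑ i ∈ s, Finsupp.single (f i) (1:ℕ)) ≤ c := by
  classical
  intro a
  rw [sum_single_apply]
  rcases Finset.eq_empty_or_nonempty (s.filter (fun i => f i = a)) with h | ⟨i, hi⟩
  · simp [h]
  · rw [Finset.mem_filter] at hi
    calc (s.filter (fun i => f i = a)).card ≤ 1 := by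
          rw [Finset.card_le_one]
          intro i hi j hj
          rw [Finset.mem_filter] at hi hj
          exact hinj hi.1 hj.1 (hi.2.trans hj.2.symm)
      _ ≤ c a := by
          have := Finsupp.mem_support_iff.mp (hmem i hi.1)
          rw [← hi.2]
          omega

lemma mapDomain_sum_single (s : Finset ι) (f : ι → α) (g : α → β) :
    Finsupp.mapDomain g (∑ i ∈ s, Finsupp.single (f i) (1:ℕ))
      = ∑ i ∈ s, Finsupp.single (g (f i)) 1 := by
  have := map_sum (Finsupp.mapDomain.addMonoidHom g) (fun i => Finsupp.single (f i) (1:ℕ)) s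
  rw [Finsupp.mapDomain.addMonoidHom_apply] at this
  rw [this]
  refine Finset.sum_congr rfl fun i _ => ?_
  rw [Finsupp.mapDomain.addMonoidHom_apply, Finsupp.mapDomain_single]

lemma Dmap_sum_single (E : α → (β →₀ ℕ)) (s : Finset ι) (f : ι → α) :
    Dmap E (∑ i ∈ s, Finsupp.single (f i) (1:ℕ)) = ∑ i ∈ s, E (f i) := by
  rw [map_sum]
  exact Finset.sum_congr rfl fun i _ => by rw [Dmap_single, one_smul]

lemma mapDomain_tsub_of_le (f : α → β) {u c : α →₀ ℕ} (h : u ≤ c) :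
    Finsupp.mapDomain f (c - u) = Finsupp.mapDomain f c - Finsupp.mapDomain f u := by
  have h1 : c = u + (c - u) := (add_tsub_cancel_of_le h).symm
  have h2 : Finsupp.mapDomain f c
      = Finsupp.mapDomain f u + Finsupp.mapDomain f (c - u) := by
    conv_lhs => rw [h1]
    rw [Finsupp.mapDomain_add]
  rw [h2, add_tsub_cancel_left]
end FinsuppHelpers

section Decomp
variable {P₁ P₂ Q : Type} [PartialOrder P₁] [Fintype P₁] [PartialOrder P₂] [Fintype P₂]
  [PartialOrder Q] [Fintype Q]

def emb1 (pq : P₁ × Q) : (P₁ ⊕ P₂) × Q := (Sum.inl pq.1, pq.2)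
def emb2 (pq : P₂ × Q) : (P₁ ⊕ P₂) × Q := (Sum.inr pq.1, pq.2)

lemma emb1_inj : Function.Injective (emb1 (P₁ := P₁) (P₂ := P₂) (Q := Q)) := by
  rintro ⟨p, q⟩ ⟨p', q'⟩ h
  simp only [emb1, Prod.ext_iff, Sum.inl.injEq] at h
  exact Prod.ext h.1 h.2

lemma emb2_inj : Function.Injective (emb2 (P₁ := P₁) (P₂ := P₂) (Q := Q)) := by
  rintro ⟨p, q⟩ ⟨p', q'⟩ h
  simp only [emb2, Prod.ext_iff, Sum.inr.injEq] at h
  exact Prod.ext h.1 h.2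

/-- first marginal -/
def m1 : (((P₁ ⊕ P₂) →o Q) →₀ ℕ) → ((P₁ →o Q) →₀ ℕ) := Finsupp.mapDomain r1
/-- second marginal -/
def m2 : (((P₁ ⊕ P₂) →o Q) →₀ ℕ) → ((P₂ →o Q) →₀ ℕ) := Finsupp.mapDomain r2

lemma m1_add (a b) : m1 (P₁ := P₁) (P₂ := P₂) (Q := Q) (a + b) = m1 a + m1 b :=
  Finsupp.mapDomain_add
lemma m2_add (a b) : m2 (P₁ := P₁) (P₂ := P₂) (Q := Q) (a + b) = m2 a + m2 b :=
  Finsupp.mapDomain_add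
lemma m1_single (χ n) : m1 (P₁ := P₁) (P₂ := P₂) (Q := Q) (Finsupp.single χ n)
    = Finsupp.single (r1 χ) n := Finsupp.mapDomain_single
lemma m2_single (χ n) : m2 (P₁ := P₁) (P₂ := P₂) (Q := Q) (Finsupp.single χ n)
    = Finsupp.single (r2 χ) n := Finsupp.mapDomain_single

lemma Evec_decomp (χ : (P₁ ⊕ P₂) →o Q) :
    Evec χ = Finsupp.mapDomain emb1 (Evec (r1 χ)) + Finsupp.mapDomain emb2 (Evec (r2 χ)) := by
  have h1 : Evec (r1 χ) = ∑ p : P₁, Finsupp.single ((p, χ (Sum.inl p)) : P₁ × Q) 1 := rfl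
  have h2 : Evec (r2 χ) = ∑ p : P₂, Finsupp.single ((p, χ (Sum.inr p)) : P₂ × Q) 1 := rfl
  rw [h1, h2, mapDomain_sum_single Finset.univ (fun p : P₁ => ((p, χ (Sum.inl p)) : P₁ × Q)) emb1,
    mapDomain_sum_single Finset.univ (fun p : P₂ => ((p, χ (Sum.inr p)) : P₂ × Q)) emb2]
  rw [Evec, Fintype.sum_sum_type]
  rfl

lemma Dmap_decomp (a : ((P₁ ⊕ P₂) →o Q) →₀ ℕ) :
    Dmap Evec a = Finsupp.mapDomain emb1 (Dmap Evec (m1 a))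
      + Finsupp.mapDomain emb2 (Dmap Evec (m2 a)) := by
  induction a using Finsupp.induction with
  | zero => simp [m1, m2]
  | single_add χ n f hf hn ih =>
    rw [map_add, ih, m1_add, m2_add, map_add, map_add, Finsupp.mapDomain_add,
      Finsupp.mapDomain_add, m1_single, m2_single, Dmap_single, Dmap_single, Dmap_single,
      Evec_decomp χ]
    have e1 : Finsupp.mapDomain emb1 (n • Evec (r1 χ)) = n • Finsupp.mapDomain emb1 (Evec (r1 χ)) :=
      (Finsupp.mapDomain.addMonoidHom (emb1 (P₁ := P₁) (P₂ := P₂) (Q := Q))).map_nsmul n _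
    have e2 : Finsupp.mapDomain emb2 (n • Evec (r2 χ)) = n • Finsupp.mapDomain emb2 (Evec (r2 χ)) :=
      (Finsupp.mapDomain.addMonoidHom (emb2 (P₁ := P₁) (P₂ := P₂) (Q := Q))).map_nsmul n _
    rw [e1, e2, smul_add]
    abel

lemma Dmap_marg1 {a b : ((P₁ ⊕ P₂) →o Q) →₀ ℕ} (hD : Dmap Evec a = Dmap Evec b) :
    Dmap Evec (m1 a) = Dmap Evec (m1 b) := by
  rw [Dmap_decomp a, Dmap_decomp b] at hD
  ext pq
  obtain ⟨p, q⟩ := pq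
  have := congrArg (fun z => z ((Sum.inl p : P₁ ⊕ P₂), q)) hD
  simp only [Finsupp.add_apply] at this
  rw [show ((Sum.inl p : P₁ ⊕ P₂), q) = emb1 (p, q) from rfl,
    Finsupp.mapDomain_apply emb1_inj, Finsupp.mapDomain_apply emb1_inj] at this
  have hz1 : Finsupp.mapDomain emb2 (Dmap Evec (m2 a)) (emb1 (p, q)) = 0 := by
    refine Finsupp.mapDomain_notin_range _ _ ?_
    rintro ⟨⟨p', q'⟩, h⟩
    simp [emb1, emb2, Prod.ext_iff] at h
  have hz2 : Finsupp.mapDomain emb2 (Dmap Evec (m2 b)) (emb1 (p, q)) = 0 := by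
    refine Finsupp.mapDomain_notin_range _ _ ?_
    rintro ⟨⟨p', q'⟩, h⟩
    simp [emb1, emb2, Prod.ext_iff] at h
  rw [hz1, hz2] at this
  simpa using this

lemma Dmap_marg2 {a b : ((P₁ ⊕ P₂) →o Q) →₀ ℕ} (hD : Dmap Evec a = Dmap Evec b) :
    Dmap Evec (m2 a) = Dmap Evec (m2 b) := by
  rw [Dmap_decomp a, Dmap_decomp b] at hD
  ext pq
  obtain ⟨p, q⟩ := pq
  have := congrArg (fun z => z ((Sum.inr p : P₁ ⊕ P₂), q)) hD
  simp only [Finsupp.add_apply] at this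
  rw [show ((Sum.inr p : P₁ ⊕ P₂), q) = emb2 (p, q) from rfl,
    Finsupp.mapDomain_apply emb2_inj, Finsupp.mapDomain_apply emb2_inj] at this
  have hz1 : Finsupp.mapDomain emb1 (Dmap Evec (m1 a)) (emb2 (p, q)) = 0 := by
    refine Finsupp.mapDomain_notin_range _ _ ?_
    rintro ⟨⟨p', q'⟩, h⟩
    simp [emb1, emb2, Prod.ext_iff] at h
  have hz2 : Finsupp.mapDomain emb1 (Dmap Evec (m1 b)) (emb2 (p, q)) = 0 := by
    refine Finsupp.mapDomain_notin_range _ _ ?_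
    rintro ⟨⟨p', q'⟩, h⟩
    simp [emb1, emb2, Prod.ext_iff] at h
  rw [hz1, hz2] at this
  simpa using this

end Decomp

section Core
variable {P₁ P₂ Q : Type} [PartialOrder P₁] [Fintype P₁] [PartialOrder P₂] [Fintype P₂]
  [PartialOrder Q] [Fintype Q]

/-- the full relation: pairs of squarefree exponents with the same image -/
def GG {σ τ : Type} (E : σ → (τ →₀ ℕ)) (u v : σ →₀ ℕ) : Prop :=
  (∀ i, u i ≤ 1) ∧ (∀ i, v i ≤ 1) ∧ Dmap E u = Dmap E v

lemma GG_symm {σ τ : Type} (E : σ → (τ →₀ ℕ)) : ∀ u v, GG E u v → GG E v u :=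
  fun _ _ h => ⟨h.2.1, h.1, h.2.2.symm⟩

lemma lift_step1 (hP : Nonempty P₁) (c : ((P₁ ⊕ P₂) →o Q) →₀ ℕ) (u v w : (P₁ →o Q) →₀ ℕ)
    (hG : GG Evec u v) (hc : m1 c = u + w) :
    ∃ c', StepR (GG Evec) c c' ∧ m1 c' = v + w ∧ m2 c' = m2 c := by
  classical
  obtain ⟨hu, hv, hD⟩ := hG
  have htok : ∀ φ ∈ u.support, ∃ χ ∈ c.support, r1 χ = φ := by
    intro φ hφ
    refine exists_preim_of_pos r1 c φ ?_
    show 0 < m1 c φ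
    rw [hc, Finsupp.add_apply]
    have : 1 ≤ u φ := Nat.one_le_iff_ne_zero.mpr (Finsupp.mem_support_iff.mp hφ)
    omega
  choose tok htokmem htokr using htok
  set tk : {φ // φ ∈ u.support} → ((P₁ ⊕ P₂) →o Q) := fun x => tok x.1 x.2 with htk
  have htkr : ∀ x, r1 (tk x) = x.1 := fun x => htokr x.1 x.2
  have hwt : wt u = wt v := by
    have h := congrArg wt hD
    rw [wt_Dmap_Evec, wt_Dmap_Evec] at h
    exact Nat.eq_of_mul_eq_mul_left (Fintype.card_pos_iff.mpr hP) h
  have hcard : u.support.card = v.support.card := by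
    rw [← wt_sq u hu, ← wt_sq v hv, hwt]
  set β := Finset.equivOfCardEq hcard with hβ
  set u' : ((P₁ ⊕ P₂) →o Q) →₀ ℕ := ∑ x ∈ u.support.attach, Finsupp.single (tk x) 1 with hu'
  set v' : ((P₁ ⊕ P₂) →o Q) →₀ ℕ :=
    ∑ x ∈ u.support.attach, Finsupp.single (pairHom (β x : P₁ →o Q) (r2 (tk x))) 1 with hv'
  have hinj1 : Set.InjOn tk u.support.attach := by
    intro x _ y _ h
    exact Subtype.ext (by rw [← htkr x, ← htkr y, h])
  have hinj2 : Set.InjOn (fun x => pairHom (β x : P₁ →o Q) (r2 (tk x))) u.support.attach := by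
    intro x _ y _ h
    have : (β x : P₁ →o Q) = (β y : P₁ →o Q) := (pairHom_inj h).1
    exact β.injective (Subtype.ext this)
  -- marginals of the tokens
  have hm1u' : m1 u' = u := by
    rw [hu']
    show Finsupp.mapDomain r1 _ = u
    rw [mapDomain_sum_single]
    rw [Finset.sum_congr rfl fun x _ => by rw [htkr x]]
    rw [Finset.sum_attach u.support (fun i => Finsupp.single i 1)]
    exact (sq_eq_sum_single u hu).symm
  have hm1v' : m1 v' = v := by
    rw [hv']
    show Finsupp.mapDomain r1 _ = v
    rw [mapDomain_sum_single]
    simp only [r1_pairHom]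
    rw [Finset.attach_eq_univ, Equiv.sum_comp β (fun y => Finsupp.single (y : P₁ →o Q) 1),
      ← Finset.attach_eq_univ, Finset.sum_attach v.support (fun i => Finsupp.single i 1)]
    exact (sq_eq_sum_single v hv).symm
  have hm2u'v' : m2 v' = m2 u' := by
    rw [hu', hv']
    show Finsupp.mapDomain r2 _ = Finsupp.mapDomain r2 _
    rw [mapDomain_sum_single, mapDomain_sum_single]
    simp only [r2_pairHom]
  -- image equality
  have hDsum : ∀ (z : (P₁ →o Q) →₀ ℕ), (∀ i, z i ≤ 1) →
      Dmap Evec z = ∑ i ∈ z.support, Evec i := by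
    intro z hz
    conv_lhs => rw [sq_eq_sum_single z hz]
    rw [Dmap_sum_single Evec z.support (fun i => i)]
  have hDu' : Dmap Evec u' = Dmap Evec v' := by
    rw [hu', hv', Dmap_sum_single, Dmap_sum_single]
    have e1 : ∀ x ∈ u.support.attach, Evec (tk x)
        = Finsupp.mapDomain emb1 (Evec (x : P₁ →o Q)) + Finsupp.mapDomain emb2 (Evec (r2 (tk x))) := by
      intro x _
      rw [Evec_decomp (tk x), htkr x]
    have e2 : ∀ x ∈ u.support.attach, Evec (pairHom (β x : P₁ →o Q) (r2 (tk x)))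
        = Finsupp.mapDomain emb1 (Evec ((β x : P₁ →o Q)))
          + Finsupp.mapDomain emb2 (Evec (r2 (tk x))) := by
      intro x _
      rw [Evec_decomp, r1_pairHom, r2_pairHom]
    rw [Finset.sum_congr rfl e1, Finset.sum_congr rfl e2, Finset.sum_add_distrib,
      Finset.sum_add_distrib]
    congr 1
    have emb_sum : ∀ (s : Finset (P₁ →o Q)),
        Finsupp.mapDomain (emb1 (P₁ := P₁) (P₂ := P₂) (Q := Q)) (∑ i ∈ s, Evec i)
          = ∑ i ∈ s, Finsupp.mapDomain emb1 (Evec i) := by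
      intro s
      have h := map_sum (Finsupp.mapDomain.addMonoidHom (emb1 (P₁ := P₁) (P₂ := P₂) (Q := Q)))
        (fun i => Evec i) s
      rw [Finsupp.mapDomain.addMonoidHom_apply] at h
      rw [h]
      exact Finset.sum_congr rfl fun i _ => by rw [Finsupp.mapDomain.addMonoidHom_apply]
    have key : ∀ (z : (P₁ →o Q) →₀ ℕ), (∀ i, z i ≤ 1) →
        (∑ x ∈ z.support.attach, Finsupp.mapDomain emb1 (Evec ((x : P₁ →o Q))))
          = Finsupp.mapDomain (emb1 (P₁ := P₁) (P₂ := P₂) (Q := Q)) (Dmap Evec z) := by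
      intro z hz
      rw [Finset.sum_attach z.support (fun i => Finsupp.mapDomain emb1 (Evec i)),
        hDsum z hz, emb_sum]
    rw [key u hu, Finset.attach_eq_univ,
      Equiv.sum_comp β (fun y => Finsupp.mapDomain emb1 (Evec ((y : P₁ →o Q)))),
      ← Finset.attach_eq_univ, key v hv, hD]
  -- squarefreeness and applicability
  have hsfu' : ∀ i, u' i ≤ 1 := by
    rw [hu']; exact sum_single_sf _ _ hinj1
  have hsfv' : ∀ i, v' i ≤ 1 := by
    rw [hv']; exact sum_single_sf _ _ hinj2
  have hle : u' ≤ c := by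
    rw [hu']
    exact sum_single_le _ _ _ hinj1 (fun x _ => htokmem x.1 x.2)
  refine ⟨v' + (c - u'), ⟨u', v', c - u', ⟨hsfu', hsfv', hDu'⟩,
    (add_tsub_cancel_of_le hle).symm, rfl⟩, ?_, ?_⟩
  · have hsplit : m1 c = m1 u' + m1 (c - u') := by
      conv_lhs => rw [← add_tsub_cancel_of_le hle]
      exact m1_add _ _
    rw [hc, hm1u'] at hsplit
    have hw : m1 (c - u') = w := by
      have := hsplit.symm
      rwa [add_right_inj] at this
    rw [m1_add, hm1v', hw]
  · have hsplit : m2 c = m2 u' + m2 (c - u') := by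
      conv_lhs => rw [← add_tsub_cancel_of_le hle]
      exact m2_add _ _
    rw [m2_add, hm2u'v', ← hsplit]

lemma lift_step2 (hP : Nonempty P₂) (c : ((P₁ ⊕ P₂) →o Q) →₀ ℕ) (u v w : (P₂ →o Q) →₀ ℕ)
    (hG : GG Evec u v) (hc : m2 c = u + w) :
    ∃ c', StepR (GG Evec) c c' ∧ m2 c' = v + w ∧ m1 c' = m1 c := by
  classical
  obtain ⟨hu, hv, hD⟩ := hG
  have htok : ∀ ψ ∈ u.support, ∃ χ ∈ c.support, r2 χ = ψ := by
    intro ψ hψ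
    refine exists_preim_of_pos r2 c ψ ?_
    show 0 < m2 c ψ
    rw [hc, Finsupp.add_apply]
    have : 1 ≤ u ψ := Nat.one_le_iff_ne_zero.mpr (Finsupp.mem_support_iff.mp hψ)
    omega
  choose tok htokmem htokr using htok
  set tk : {ψ // ψ ∈ u.support} → ((P₁ ⊕ P₂) →o Q) := fun x => tok x.1 x.2 with htk
  have htkr : ∀ x, r2 (tk x) = x.1 := fun x => htokr x.1 x.2
  have hwt : wt u = wt v := by
    have h := congrArg wt hD
    rw [wt_Dmap_Evec, wt_Dmap_Evec] at h
    exact Nat.eq_of_mul_eq_mul_left (Fintype.card_pos_iff.mpr hP) h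
  have hcard : u.support.card = v.support.card := by
    rw [← wt_sq u hu, ← wt_sq v hv, hwt]
  set β := Finset.equivOfCardEq hcard with hβ
  set u' : ((P₁ ⊕ P₂) →o Q) →₀ ℕ := ∑ x ∈ u.support.attach, Finsupp.single (tk x) 1 with hu'
  set v' : ((P₁ ⊕ P₂) →o Q) →₀ ℕ :=
    ∑ x ∈ u.support.attach, Finsupp.single (pairHom (r1 (tk x)) (β x : P₂ →o Q)) 1 with hv'
  have hinj1 : Set.InjOn tk u.support.attach := by
    intro x _ y _ h
    exact Subtype.ext (by rw [← htkr x, ← htkr y, h])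
  have hinj2 : Set.InjOn (fun x => pairHom (r1 (tk x)) (β x : P₂ →o Q)) u.support.attach := by
    intro x _ y _ h
    have : (β x : P₂ →o Q) = (β y : P₂ →o Q) := (pairHom_inj h).2
    exact β.injective (Subtype.ext this)
  have hm2u' : m2 u' = u := by
    rw [hu']
    show Finsupp.mapDomain r2 _ = u
    rw [mapDomain_sum_single]
    rw [Finset.sum_congr rfl fun x _ => by rw [htkr x]]
    rw [Finset.sum_attach u.support (fun i => Finsupp.single i 1)]
    exact (sq_eq_sum_single u hu).symm
  have hm2v' : m2 v' = v := by
    rw [hv']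
    show Finsupp.mapDomain r2 _ = v
    rw [mapDomain_sum_single]
    simp only [r2_pairHom]
    rw [Finset.attach_eq_univ, Equiv.sum_comp β (fun y => Finsupp.single (y : P₂ →o Q) 1),
      ← Finset.attach_eq_univ, Finset.sum_attach v.support (fun i => Finsupp.single i 1)]
    exact (sq_eq_sum_single v hv).symm
  have hm1u'v' : m1 v' = m1 u' := by
    rw [hu', hv']
    show Finsupp.mapDomain r1 _ = Finsupp.mapDomain r1 _
    rw [mapDomain_sum_single, mapDomain_sum_single]
    simp only [r1_pairHom]
  have hDsum : ∀ (z : (P₂ →o Q) →₀ ℕ), (∀ i, z i ≤ 1) →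
      Dmap Evec z = ∑ i ∈ z.support, Evec i := by
    intro z hz
    conv_lhs => rw [sq_eq_sum_single z hz]
    rw [Dmap_sum_single Evec z.support (fun i => i)]
  have hDu' : Dmap Evec u' = Dmap Evec v' := by
    rw [hu', hv', Dmap_sum_single, Dmap_sum_single]
    have e1 : ∀ x ∈ u.support.attach, Evec (tk x)
        = Finsupp.mapDomain emb2 (Evec ((x : P₂ →o Q)))
          + Finsupp.mapDomain emb1 (Evec (r1 (tk x))) := by
      intro x _
      rw [Evec_decomp (tk x), htkr x, add_comm]
    have e2 : ∀ x ∈ u.support.attach, Evec (pairHom (r1 (tk x)) (β x : P₂ →o Q))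
        = Finsupp.mapDomain emb2 (Evec ((β x : P₂ →o Q)))
          + Finsupp.mapDomain emb1 (Evec (r1 (tk x))) := by
      intro x _
      rw [Evec_decomp, r1_pairHom, r2_pairHom, add_comm]
    rw [Finset.sum_congr rfl e1, Finset.sum_congr rfl e2, Finset.sum_add_distrib,
      Finset.sum_add_distrib]
    congr 1
    have emb_sum : ∀ (s : Finset (P₂ →o Q)),
        Finsupp.mapDomain (emb2 (P₁ := P₁) (P₂ := P₂) (Q := Q)) (∑ i ∈ s, Evec i)
          = ∑ i ∈ s, Finsupp.mapDomain emb2 (Evec i) := by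
      intro s
      have h := map_sum (Finsupp.mapDomain.addMonoidHom (emb2 (P₁ := P₁) (P₂ := P₂) (Q := Q)))
        (fun i => Evec i) s
      rw [Finsupp.mapDomain.addMonoidHom_apply] at h
      rw [h]
      exact Finset.sum_congr rfl fun i _ => by rw [Finsupp.mapDomain.addMonoidHom_apply]
    have key : ∀ (z : (P₂ →o Q) →₀ ℕ), (∀ i, z i ≤ 1) →
        (∑ x ∈ z.support.attach, Finsupp.mapDomain emb2 (Evec ((x : P₂ →o Q))))
          = Finsupp.mapDomain (emb2 (P₁ := P₁) (P₂ := P₂) (Q := Q)) (Dmap Evec z) := by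
      intro z hz
      rw [Finset.sum_attach z.support (fun i => Finsupp.mapDomain emb2 (Evec i)),
        hDsum z hz, emb_sum]
    rw [key u hu, Finset.attach_eq_univ,
      Equiv.sum_comp β (fun y => Finsupp.mapDomain emb2 (Evec ((y : P₂ →o Q)))),
      ← Finset.attach_eq_univ, key v hv, hD]
  have hsfu' : ∀ i, u' i ≤ 1 := by
    rw [hu']; exact sum_single_sf _ _ hinj1
  have hsfv' : ∀ i, v' i ≤ 1 := by
    rw [hv']; exact sum_single_sf _ _ hinj2
  have hle : u' ≤ c := by
    rw [hu']
    exact sum_single_le _ _ _ hinj1 (fun x _ => htokmem x.1 x.2)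
  refine ⟨v' + (c - u'), ⟨u', v', c - u', ⟨hsfu', hsfv', hDu'⟩,
    (add_tsub_cancel_of_le hle).symm, rfl⟩, ?_, ?_⟩
  · have hsplit : m2 c = m2 u' + m2 (c - u') := by
      conv_lhs => rw [← add_tsub_cancel_of_le hle]
      exact m2_add _ _
    rw [hc, hm2u'] at hsplit
    have hw : m2 (c - u') = w := by
      have := hsplit.symm
      rwa [add_right_inj] at this
    rw [m2_add, hm2v', hw]
  · have hsplit : m1 c = m1 u' + m1 (c - u') := by
      conv_lhs => rw [← add_tsub_cancel_of_le hle]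
      exact m1_add _ _
    rw [m1_add, hm1u'v', ← hsplit]

end Core

section Core2
variable {P₁ P₂ Q : Type} [PartialOrder P₁] [Fintype P₁] [PartialOrder P₂] [Fintype P₂]
  [PartialOrder Q] [Fintype Q]

lemma lift_chain1 (hP : Nonempty P₁) {x y : (P₁ →o Q) →₀ ℕ} (h : SRel (GG Evec) x y) :
    ∀ c : ((P₁ ⊕ P₂) →o Q) →₀ ℕ, m1 c = x →
      ∃ c', SRel (GG Evec) c c' ∧ m1 c' = y ∧ m2 c' = m2 c := by
  induction h with
  | refl => exact fun c hc => ⟨c, SRel.rfl, hc, rfl⟩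
  | tail hxy hstep ih =>
    intro c hc
    obtain ⟨c', hrel, hm1, hm2⟩ := ih c hc
    obtain ⟨u, v, w, hg, hb, hz⟩ := hstep
    obtain ⟨c'', hstep'', hm1'', hm2''⟩ := lift_step1 hP c' u v w hg (hm1.trans hb)
    exact ⟨c'', hrel.trans (SRel.single hstep''), by rw [hm1'', hz], hm2''.trans hm2⟩

lemma lift_chain2 (hP : Nonempty P₂) {x y : (P₂ →o Q) →₀ ℕ} (h : SRel (GG Evec) x y) :
    ∀ c : ((P₁ ⊕ P₂) →o Q) →₀ ℕ, m2 c = x →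
      ∃ c', SRel (GG Evec) c c' ∧ m2 c' = y ∧ m1 c' = m1 c := by
  induction h with
  | refl => exact fun c hc => ⟨c, SRel.rfl, hc, rfl⟩
  | tail hxy hstep ih =>
    intro c hc
    obtain ⟨c', hrel, hm2, hm1⟩ := ih c hc
    obtain ⟨u, v, w, hg, hb, hz⟩ := hstep
    obtain ⟨c'', hstep'', hm2'', hm1''⟩ := lift_step2 hP c' u v w hg (hm2.trans hb)
    exact ⟨c'', hrel.trans (SRel.single hstep''), by rw [hm2'', hz], hm1''.trans hm1⟩

lemma finsupp_subsingleton_wt_eq {α : Type} [Subsingleton α] {x y : α →₀ ℕ}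
    (h : wt x = wt y) : x = y := by
  classical
  have key : ∀ (z : α →₀ ℕ) (a : α), wt z = z a := by
    intro z a
    rw [wt_apply, Finsupp.sum]
    by_cases hmem : a ∈ z.support
    · exact Finset.sum_eq_single_of_mem a hmem fun b _ hba =>
        absurd (Subsingleton.elim b a) hba
    · have : z.support = ∅ := by
        refine Finset.eq_empty_of_forall_notMem fun s hs => ?_
        rw [Subsingleton.elim s a] at hs
        exact hmem hs
      rw [this, Finset.sum_empty, eq_comm]
      exact Finsupp.notMem_support_iff.mp hmem
  ext a
  rw [← key x a, ← key y a, h]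

lemma swap_connect (a b : ((P₁ ⊕ P₂) →o Q) →₀ ℕ) (hm1 : m1 a = m1 b) (hm2 : m2 a = m2 b) :
    SRel (GG Evec) a b := by
  classical
  generalize hn : wt a = n
  induction n using Nat.strong_induction_on generalizing a b with
  | _ n IH =>
  by_cases ha0 : a = 0
  · subst ha0
    have hb0 : b = 0 := by
      have h := congrArg wt hm1
      rw [show m1 (0 : ((P₁ ⊕ P₂) →o Q) →₀ ℕ) = 0 from Finsupp.mapDomain_zero] at h
      have hw : wt b = 0 := by
        rw [← wt_mapDomain r1 b]
        exact (h.symm.trans (map_zero wt))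
      exact wt_eq_zero hw
    rw [hb0]
    exact SRel.rfl
  obtain ⟨χ, hχ⟩ := Finsupp.support_nonempty_iff.mpr ha0
  have haχ : 1 ≤ a χ := Nat.one_le_iff_ne_zero.mpr (Finsupp.mem_support_iff.mp hχ)
  suffices hb' : ∃ b', SRel (GG Evec) b b' ∧ m1 b' = m1 b ∧ m2 b' = m2 b ∧ χ ∈ b'.support by
    obtain ⟨b', hbb', hb1, hb2, hχb'⟩ := hb'
    have hle_a : Finsupp.single χ 1 ≤ a := Finsupp.single_le_iff.mpr haχ
    have hle_b : Finsupp.single χ 1 ≤ b' := Finsupp.single_le_iff.mpr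
      (Nat.one_le_iff_ne_zero.mpr (Finsupp.mem_support_iff.mp hχb'))
    set a' := a - Finsupp.single χ 1 with ha'
    set b'' := b' - Finsupp.single χ 1 with hb''
    have haa : Finsupp.single χ 1 + a' = a := add_tsub_cancel_of_le hle_a
    have hbb : Finsupp.single χ 1 + b'' = b' := add_tsub_cancel_of_le hle_b
    have hm1' : m1 a' = m1 b'' := by
      have e1 : m1 (Finsupp.single χ 1) + m1 a' = m1 (Finsupp.single χ 1) + m1 b'' := by
        rw [← m1_add, ← m1_add, haa, hbb, hm1, hb1]
      exact add_left_cancel e1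
    have hm2' : m2 a' = m2 b'' := by
      have e1 : m2 (Finsupp.single χ 1) + m2 a' = m2 (Finsupp.single χ 1) + m2 b'' := by
        rw [← m2_add, ← m2_add, haa, hbb, hm2, hb2]
      exact add_left_cancel e1
    have hwt : wt a' < n := by
      have := congrArg wt haa
      rw [map_add, wt_single] at this
      omega
    have hrec : SRel (GG Evec) a' b'' := IH (wt a') hwt a' b'' hm1' hm2' rfl
    have : SRel (GG Evec) (Finsupp.single χ 1 + a') (Finsupp.single χ 1 + b'') :=
      hrec.add_left _
    rw [haa, hbb] at this
    exact this.trans (SRel.symm (GG_symm Evec) hbb')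
  by_cases hχb : χ ∈ b.support
  · exact ⟨b, SRel.rfl, rfl, rfl, hχb⟩
  have hex1 : ∃ χ' ∈ b.support, r1 χ' = r1 χ := by
    have h1 : a χ ≤ m1 a (r1 χ) := apply_le_mapDomain r1 a χ
    have h2 : m1 a (r1 χ) = m1 b (r1 χ) := by rw [hm1]
    refine exists_preim_of_pos r1 b (r1 χ) ?_
    show 0 < m1 b (r1 χ)
    omega
  have hex2 : ∃ χ'' ∈ b.support, r2 χ'' = r2 χ := by
    have h1 : a χ ≤ m2 a (r2 χ) := apply_le_mapDomain r2 a χ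
    have h2 : m2 a (r2 χ) = m2 b (r2 χ) := by rw [hm2]
    refine exists_preim_of_pos r2 b (r2 χ) ?_
    show 0 < m2 b (r2 χ)
    omega
  obtain ⟨χ', hχ'mem, hχ'r⟩ := hex1
  obtain ⟨χ'', hχ''mem, hχ''r⟩ := hex2
  set δ := pairHom (r1 χ'') (r2 χ') with hδ
  have hbχ' : 1 ≤ b χ' := Nat.one_le_iff_ne_zero.mpr (Finsupp.mem_support_iff.mp hχ'mem)
  have hbχ'' : 1 ≤ b χ'' := Nat.one_le_iff_ne_zero.mpr (Finsupp.mem_support_iff.mp hχ''mem)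
  have hne : χ' ≠ χ'' := by
    intro h
    apply hχb
    have : χ' = χ := by
      rw [← pairHom_r χ', hχ'r, h, hχ''r, pairHom_r]
    exact this ▸ hχ'mem
  have hδχ : χ ≠ δ := by
    intro h
    apply hχb
    have hr2 : r2 χ' = r2 χ := by rw [show r2 χ' = r2 δ from rfl, ← h]
    have : χ' = χ := by
      rw [← pairHom_r χ', hχ'r, hr2, pairHom_r]
    exact this ▸ hχ'mem
  set L := Finsupp.single χ' 1 + Finsupp.single χ'' 1 with hL
  set R := Finsupp.single χ 1 + Finsupp.single δ 1 with hR
  have hLle : L ≤ b := by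
    intro i
    rw [hL, Finsupp.add_apply, Finsupp.single_apply, Finsupp.single_apply]
    by_cases e1 : χ' = i
    · rw [if_pos e1, if_neg (fun h => hne (e1.trans h.symm))]
      rw [← e1]; omega
    · rw [if_neg e1]
      by_cases e2 : χ'' = i
      · rw [if_pos e2, ← e2]; omega
      · rw [if_neg e2]; omega
  have hsfL : ∀ i, L i ≤ 1 := by
    intro i
    rw [hL, Finsupp.add_apply, Finsupp.single_apply, Finsupp.single_apply]
    by_cases e1 : χ' = i
    · rw [if_pos e1, if_neg (fun h => hne (e1.trans h.symm))]
      omega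
    · rw [if_neg e1]
      by_cases e2 : χ'' = i
      · rw [if_pos e2]
      · rw [if_neg e2]
        omega
  have hsfR : ∀ i, R i ≤ 1 := by
    intro i
    rw [hR, Finsupp.add_apply, Finsupp.single_apply, Finsupp.single_apply]
    by_cases e1 : χ = i
    · rw [if_pos e1, if_neg (fun h => hδχ (e1.trans h.symm))]
      omega
    · rw [if_neg e1]
      by_cases e2 : δ = i
      · rw [if_pos e2]
      · rw [if_neg e2]
        omega
  have hDLR : Dmap Evec L = Dmap Evec R := by
    rw [hL, hR, map_add, map_add]
    have hone : ∀ ξ : (P₁ ⊕ P₂) →o Q, Dmap Evec (Finsupp.single ξ 1) = Evec ξ := by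
      intro ξ; rw [Dmap_single, one_smul]
    rw [hone, hone, hone, hone]
    rw [Evec_decomp χ', Evec_decomp χ'', Evec_decomp χ, Evec_decomp δ]
    rw [hδ, r1_pairHom, r2_pairHom, ← hχ'r, ← hχ''r]
    abel
  set b' := R + (b - L) with hb'def
  have hstepb : StepR (GG Evec) b b' :=
    ⟨L, R, b - L, ⟨hsfL, hsfR, hDLR⟩, (add_tsub_cancel_of_le hLle).symm, rfl⟩
  have hsplit : b = L + (b - L) := (add_tsub_cancel_of_le hLle).symm
  have hm1LR : m1 L = m1 R := by
    show Finsupp.mapDomain r1 L = Finsupp.mapDomain r1 R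
    rw [hL, hR, Finsupp.mapDomain_add, Finsupp.mapDomain_add, Finsupp.mapDomain_single,
      Finsupp.mapDomain_single, Finsupp.mapDomain_single, Finsupp.mapDomain_single]
    simp only [hδ, r1_pairHom, hχ'r]
  have hm2LR : m2 L = m2 R := by
    show Finsupp.mapDomain r2 L = Finsupp.mapDomain r2 R
    rw [hL, hR, Finsupp.mapDomain_add, Finsupp.mapDomain_add, Finsupp.mapDomain_single,
      Finsupp.mapDomain_single, Finsupp.mapDomain_single, Finsupp.mapDomain_single]
    simp only [hδ, r2_pairHom, hχ''r]
    exact add_comm _ _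
  have hm1b' : m1 b' = m1 b := by
    rw [hb'def, m1_add, ← hm1LR]
    conv_rhs => rw [hsplit, m1_add]
  have hm2b' : m2 b' = m2 b := by
    rw [hb'def, m2_add, ← hm2LR]
    conv_rhs => rw [hsplit, m2_add]
  have hχb' : χ ∈ b'.support := by
    rw [Finsupp.mem_support_iff]
    have : R χ = 1 + Finsupp.single δ 1 χ := by
      rw [hR, Finsupp.add_apply, Finsupp.single_eq_same]
    have hb'χ : b' χ = R χ + (b - L) χ := by rw [hb'def, Finsupp.add_apply]
    omega
  exact ⟨b', SRel.single hstepb, hm1b', hm2b', hχb'⟩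

end Core2

section Main
variable {P₁ P₂ Q : Type} [PartialOrder P₁] [Fintype P₁] [PartialOrder P₂] [Fintype P₂]
  [PartialOrder Q] [Fintype Q]

lemma main_chain
    (hh1 : ∀ x y : (P₁ →o Q) →₀ ℕ, Dmap Evec x = Dmap Evec y → SRel (GG Evec) x y)
    (hh2 : ∀ x y : (P₂ →o Q) →₀ ℕ, Dmap Evec x = Dmap Evec y → SRel (GG Evec) x y)
    (a b : ((P₁ ⊕ P₂) →o Q) →₀ ℕ) (hD : Dmap Evec a = Dmap Evec b) :
    SRel (GG Evec) a b := by
  classical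
  by_cases hPe : IsEmpty P₁ ∧ IsEmpty P₂
  · obtain ⟨hE1, hE2⟩ := hPe
    have hIE : IsEmpty (P₁ ⊕ P₂) := by infer_instance
    have hE0 : ∀ χ : (P₁ ⊕ P₂) →o Q, Evec χ = 0 := by
      intro χ
      rw [Evec, Finset.univ_eq_empty, Finset.sum_empty]
    have hG0 : ∀ χ : (P₁ ⊕ P₂) →o Q, GG Evec (Finsupp.single χ 1) 0 := by
      intro χ
      refine ⟨?_, fun i => by simp, ?_⟩
      · intro i
        rw [Finsupp.single_apply]
        split <;> omega
      · rw [Dmap_single, one_smul, hE0, map_zero]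
    have key : ∀ (n : ℕ) (z : ((P₁ ⊕ P₂) →o Q) →₀ ℕ), wt z = n → SRel (GG Evec) z 0 := by
      intro n
      induction n using Nat.strong_induction_on with
      | _ n IH =>
      intro z hz
      by_cases hz0 : z = 0
      · rw [hz0]; exact SRel.rfl
      obtain ⟨χ, hχ⟩ := Finsupp.support_nonempty_iff.mpr hz0
      have hle : Finsupp.single χ 1 ≤ z := Finsupp.single_le_iff.mpr
        (Nat.one_le_iff_ne_zero.mpr (Finsupp.mem_support_iff.mp hχ))
      have hstep : StepR (GG Evec) z (z - Finsupp.single χ 1) :=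
        ⟨Finsupp.single χ 1, 0, z - Finsupp.single χ 1, hG0 χ,
          (add_tsub_cancel_of_le hle).symm, (zero_add _).symm⟩
      have hwt : wt (z - Finsupp.single χ 1) < n := by
        have := congrArg wt (add_tsub_cancel_of_le hle)
        rw [map_add, wt_single] at this
        omega
      exact (SRel.single hstep).trans (IH _ hwt _ rfl)
    exact (key _ a rfl).trans (SRel.symm (GG_symm _) (key _ b rfl))
  · have hne : Nonempty P₁ ∨ Nonempty P₂ := by
      rw [not_and_or, not_isEmpty_iff, not_isEmpty_iff] at hPe
      exact hPe
    have hmarg1 := Dmap_marg1 hD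
    have hmarg2 := Dmap_marg2 hD
    obtain ⟨a', haa', ha'1, ha'2⟩ :
        ∃ a', SRel (GG Evec) a a' ∧ m1 a' = m1 b ∧ m2 a' = m2 a := by
      by_cases hP1 : Nonempty P₁
      · exact lift_chain1 hP1 (hh1 _ _ hmarg1) a rfl
      · have hIE : IsEmpty P₁ := not_nonempty_iff.mp hP1
        have hss : Subsingleton (P₁ →o Q) :=
          ⟨fun f g => OrderHom.ext f g (funext fun p => (hIE.false p).elim)⟩
        have hP2 : Nonempty P₂ := hne.resolve_left hP1
        have hw2 : wt (m2 a) = wt (m2 b) := by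
          have h := congrArg wt hmarg2
          rw [wt_Dmap_Evec, wt_Dmap_Evec] at h
          exact Nat.eq_of_mul_eq_mul_left (Fintype.card_pos_iff.mpr hP2) h
        have hwab : wt a = wt b := by
          rw [← wt_mapDomain r2 a, ← wt_mapDomain r2 b]
          exact hw2
        have hm1ab : m1 a = m1 b := by
          refine finsupp_subsingleton_wt_eq ?_
          show wt (Finsupp.mapDomain r1 a) = wt (Finsupp.mapDomain r1 b)
          rw [wt_mapDomain, wt_mapDomain, hwab]
        exact ⟨a, SRel.rfl, hm1ab, rfl⟩
    obtain ⟨a'', ha'a'', ha''2, ha''1⟩ :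
        ∃ a'', SRel (GG Evec) a' a'' ∧ m2 a'' = m2 b ∧ m1 a'' = m1 a' := by
      by_cases hP2 : Nonempty P₂
      · have hda' : Dmap Evec (m2 a') = Dmap Evec (m2 b) := by rw [ha'2]; exact hmarg2
        exact lift_chain2 hP2 (hh2 _ _ hda') a' rfl
      · have hIE : IsEmpty P₂ := not_nonempty_iff.mp hP2
        have hss : Subsingleton (P₂ →o Q) :=
          ⟨fun f g => OrderHom.ext f g (funext fun p => (hIE.false p).elim)⟩
        have hP1 : Nonempty P₁ := hne.resolve_right hP2
        have hwa'b : wt a' = wt b := by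
          rw [← wt_mapDomain r1 a', ← wt_mapDomain r1 b]
          show wt (m1 a') = wt (m1 b)
          rw [ha'1]
        have hm2a'b : m2 a' = m2 b := by
          refine finsupp_subsingleton_wt_eq ?_
          show wt (Finsupp.mapDomain r2 a') = wt (Finsupp.mapDomain r2 b)
          rw [wt_mapDomain, wt_mapDomain, hwa'b]
        exact ⟨a', SRel.rfl, hm2a'b, rfl⟩
    exact haa'.trans (ha'a''.trans (swap_connect a'' b (ha''1.trans ha'1) ha''2))

end Main

section Glue
variable {K : Type} [Field K] {P Q : Type} [PartialOrder P] [Fintype P]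
  [PartialOrder Q] [Fintype Q]

lemma mem_isotonianIdeal_iff (f : MvPolynomial (P →o Q) K) :
    f ∈ isotonianIdeal K P Q ↔ aeval (fun φ : P →o Q => monomial (Evec φ) (1:K)) f = 0 := by
  rw [isotonianIdeal, RingHom.mem_ker, isotonianMap_eq]

lemma binomial_mem_ker {u v : (P →o Q) →₀ ℕ} (hD : Dmap Evec u = Dmap Evec v) :
    (monomial u (1:K) - monomial v 1) ∈ isotonianIdeal K P Q := by
  rw [mem_isotonianIdeal_iff, map_sub, aevalE_monomial, aevalE_monomial, hD, sub_self]

lemma Dmap_eq_of_mem {u v : (P →o Q) →₀ ℕ}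
    (h : (monomial u (1:K) - monomial v 1) ∈ isotonianIdeal K P Q) :
    Dmap Evec u = Dmap Evec v := by
  rw [mem_isotonianIdeal_iff, map_sub, aevalE_monomial, aevalE_monomial, sub_eq_zero] at h
  by_contra hne
  have := congrArg (coeff (Dmap Evec u)) h
  rw [coeff_monomial, coeff_monomial, if_pos rfl, if_neg (fun hh => hne hh.symm)] at this
  exact one_ne_zero this

lemma srel_of_gen
    (h : isotonianIdeal K P Q =
      Ideal.span {f | f ∈ isotonianIdeal K P Q ∧ IsSquarefreeBinomial f}) :
    ∀ x y : (P →o Q) →₀ ℕ, Dmap Evec x = Dmap Evec y → SRel (GG Evec) x y := by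
  intro x y hD
  apply srel_of_mem_span (K := K) (GG_symm (Evec (P := P) (Q := Q)))
  have hmem : (monomial x (1:K) - monomial y 1) ∈ isotonianIdeal K P Q := binomial_mem_ker hD
  rw [h] at hmem
  refine Ideal.span_le.mpr ?_ hmem
  rintro f ⟨hfJ, u, v, hu, hv, rfl⟩
  exact Ideal.subset_span ⟨u, v, ⟨hu, hv, Dmap_eq_of_mem hfJ⟩, rfl⟩

end Glue

end
end Statement9

open Statement9 in
theorem statement9 (K P₁ P₂ Q : Type) [Field K] [PartialOrder P₁] [Fintype P₁]
    [PartialOrder P₂] [Fintype P₂] [PartialOrder Q] [Fintype Q]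
    (h1 : isotonianIdeal K P₁ Q =
      Ideal.span {f | f ∈ isotonianIdeal K P₁ Q ∧ IsSquarefreeBinomial f})
    (h2 : isotonianIdeal K P₂ Q =
      Ideal.span {f | f ∈ isotonianIdeal K P₂ Q ∧ IsSquarefreeBinomial f}) :
    isotonianIdeal K (P₁ ⊕ P₂) Q =
      Ideal.span {f | f ∈ isotonianIdeal K (P₁ ⊕ P₂) Q ∧ IsSquarefreeBinomial f} := by
  apply le_antisymm
  · intro f hf
    rw [mem_isotonianIdeal_iff] at hf
    have hspan := ker_mem_span_binomials Evec f hf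
    refine Ideal.span_le.mpr ?_ hspan
    rintro g ⟨u, v, hD, rfl⟩
    have hsrel : SRel (GG Evec) u v :=
      main_chain (srel_of_gen h1) (srel_of_gen h2) u v hD
    have hmem := hsrel.mem_span (K := K)
    refine Ideal.span_le.mpr ?_ hmem
    rintro g' ⟨u', v', ⟨hu', hv', hD'⟩, rfl⟩
    exact Ideal.subset_span ⟨binomial_mem_ker hD', ⟨u', v', hu', hv', rfl⟩⟩
  · rw [Ideal.span_le]
    rintro f ⟨hfJ, -⟩
    exact hfJ
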